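/- For every d ≥ 1 and every t ∈ ℕ, the Bochner integral of U^{⊗t} ⊗ (U^*)^{⊗t} over the unitary group U(d) with respect to its normalized (probability) Haar measure equals the Bochner integral of W^{⊗t} ⊗ (W^*)^{⊗t} over the special unitary group SU(d) with respect to its normalized (probability) Haar measure. -/

import Mathlib

open Matrix MeasureTheory
open scoped Kronecker

/-- Matrices inherit the (Borel) product measurable structure of functions. -/
noncomputable instance matrixMeasurableSpace (m n : Type*) : MeasurableSpace (Matrix m n ℂ) :=
  inferInstanceAs (MeasurableSpace (m → n → ℂ))

/-- The special unitary group is a group (inverse given by the conjugate transpose). -/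
noncomputable instance specialUnitaryGroup.group {n : Type*} [DecidableEq n] [Fintype n] :
    Group ↥(Matrix.specialUnitaryGroup n ℂ) :=
  { (inferInstance : Monoid ↥(Matrix.specialUnitaryGroup n ℂ)) with
    inv := fun A => ⟨star A.1, by
      obtain ⟨hu, hd⟩ := Matrix.mem_specialUnitaryGroup_iff.mp A.2
      refine Matrix.mem_specialUnitaryGroup_iff.mpr ⟨Unitary.star_mem hu, ?_⟩
      rw [Matrix.star_eq_conjTranspose, Matrix.det_conjTranspose, hd, star_one]⟩
    inv_mul_cancel := fun A => Subtype.ext A.2.1.1 }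

/-- The `t`-fold Kronecker power of a `d × d` complex matrix:
`L^{⊗t}(i,j) = ∏_{s<t} L (i s) (j s)`. -/
noncomputable def kroneckerPow {d : ℕ} (t : ℕ) (L : Matrix (Fin d) (Fin d) ℂ) :
    Matrix (Fin t → Fin d) (Fin t → Fin d) ℂ :=
  fun i j => ∏ s : Fin t, L (i s) (j s)

/-- `L^{⊗t} ⊗ (L^*)^{⊗t}`, the matrix averaged in the definition of a `t`-design. -/
noncomputable def designMat {d : ℕ} (t : ℕ) (L : Matrix (Fin d) (Fin d) ℂ) :
    Matrix ((Fin t → Fin d) × (Fin t → Fin d)) ((Fin t → Fin d) × (Fin t → Fin d)) ℂ :=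
  kroneckerPow t L ⊗ₖ kroneckerPow t (L.map (starRingEnd ℂ))

/-! ### Auxiliary instances and lemmas -/

open scoped ComplexConjugate
open Topology

instance matrixBorelSpace (d : ℕ) : BorelSpace (Matrix (Fin d) (Fin d) ℂ) :=
  inferInstanceAs (BorelSpace ((Fin d) → (Fin d) → ℂ))

instance ugBorel (d : ℕ) : BorelSpace ↥(Matrix.unitaryGroup (Fin d) ℂ) :=
  Subtype.borelSpace _

instance sugBorel (d : ℕ) : BorelSpace ↥(Matrix.specialUnitaryGroup (Fin d) ℂ) :=
  Subtype.borelSpace _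

noncomputable instance : MeasurableSpace Circle := borel _
instance : BorelSpace Circle := ⟨rfl⟩

instance ugContinuousInv (d : ℕ) : ContinuousInv ↥(Matrix.unitaryGroup (Fin d) ℂ) :=
  ⟨(continuous_star.comp continuous_subtype_val).subtype_mk _⟩

instance ugTopGroup (d : ℕ) : IsTopologicalGroup ↥(Matrix.unitaryGroup (Fin d) ℂ) := {}

instance sugContinuousInv (d : ℕ) : ContinuousInv ↥(Matrix.specialUnitaryGroup (Fin d) ℂ) :=
  ⟨(continuous_star.comp continuous_subtype_val).subtype_mk _⟩

instance sugTopGroup (d : ℕ) : IsTopologicalGroup ↥(Matrix.specialUnitaryGroup (Fin d) ℂ) := {}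

theorem isCompact_ug (d : ℕ) :
    IsCompact (Matrix.unitaryGroup (Fin d) ℂ : Set (Matrix (Fin d) (Fin d) ℂ)) := by
  have hK : IsCompact (Set.pi Set.univ fun _ : Fin d =>
      Set.pi Set.univ fun _ : Fin d => Metric.closedBall (0:ℂ) 1 :
        Set (Matrix (Fin d) (Fin d) ℂ)) :=
    isCompact_univ_pi fun _ => isCompact_univ_pi fun _ => isCompact_closedBall _ _
  refine hK.of_isClosed_subset ?_ ?_
  · have h1 : IsClosed {M : Matrix (Fin d) (Fin d) ℂ | star M * M = 1} :=
      isClosed_eq ((continuous_star.matrix_mul continuous_id)) continuous_const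
    have h2 : IsClosed {M : Matrix (Fin d) (Fin d) ℂ | M * star M = 1} :=
      isClosed_eq ((continuous_id.matrix_mul continuous_star)) continuous_const
    have he : (Matrix.unitaryGroup (Fin d) ℂ : Set (Matrix (Fin d) (Fin d) ℂ)) =
        {M | star M * M = 1} ∩ {M | M * star M = 1} := rfl
    exact he ▸ h1.inter h2
  · intro M hM
    rw [Set.mem_univ_pi]
    intro i
    rw [Set.mem_univ_pi]
    intro j
    simpa [Complex.dist_eq] using entry_norm_bound_of_unitary hM i j

instance ugCompact (d : ℕ) : CompactSpace ↥(Matrix.unitaryGroup (Fin d) ℂ) :=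
  isCompact_iff_compactSpace.mp (isCompact_ug d)

theorem isCompact_sug (d : ℕ) :
    IsCompact (Matrix.specialUnitaryGroup (Fin d) ℂ : Set (Matrix (Fin d) (Fin d) ℂ)) := by
  refine (isCompact_ug d).of_isClosed_subset ?_ ?_
  · have h1 : IsClosed (Matrix.unitaryGroup (Fin d) ℂ : Set (Matrix (Fin d) (Fin d) ℂ)) :=
      (isCompact_ug d).isClosed
    have h2 : IsClosed {M : Matrix (Fin d) (Fin d) ℂ | M.det = 1} :=
      isClosed_eq (continuous_id.matrix_det) continuous_const
    have he : (Matrix.specialUnitaryGroup (Fin d) ℂ : Set (Matrix (Fin d) (Fin d) ℂ)) =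
        (Matrix.unitaryGroup (Fin d) ℂ : Set _) ∩ {M | M.det = 1} := by
      ext M
      simp only [SetLike.mem_coe, Set.mem_inter_iff, Set.mem_setOf_eq]
      exact Matrix.mem_specialUnitaryGroup_iff
    exact he ▸ h1.inter h2
  · intro M hM
    simp only [SetLike.mem_coe] at hM ⊢
    exact (Matrix.mem_specialUnitaryGroup_iff.mp hM).1

instance sugCompact (d : ℕ) : CompactSpace ↥(Matrix.specialUnitaryGroup (Fin d) ℂ) :=
  isCompact_iff_compactSpace.mp (isCompact_sug d)

theorem smul_mem_unitaryGroup {d : ℕ} {z : ℂ} (hz : z * conj z = 1)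
    {U : Matrix (Fin d) (Fin d) ℂ} (hU : U ∈ Matrix.unitaryGroup (Fin d) ℂ) :
    z • U ∈ Matrix.unitaryGroup (Fin d) ℂ := by
  rw [Matrix.mem_unitaryGroup_iff] at hU ⊢
  have hstar : star (z • U) = conj z • star U := by
    rw [star_smul]; rfl
  rw [hstar, smul_mul_assoc, mul_smul_comm, smul_smul, hU, hz, one_smul]

/-- The multiplication-by-phase homomorphism `Circle × SU(d) →* U(d)`. -/
noncomputable def phaseHom (d : ℕ) :
    Circle × ↥(Matrix.specialUnitaryGroup (Fin d) ℂ) →* ↥(Matrix.unitaryGroup (Fin d) ℂ) where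
  toFun p := ⟨(p.1 : ℂ) • (p.2 : Matrix (Fin d) (Fin d) ℂ),
    smul_mem_unitaryGroup (by rw [← Circle.coe_inv_eq_conj, ← Circle.coe_mul, mul_inv_cancel,
      Circle.coe_one]) p.2.2.1⟩
  map_one' := by
    ext : 1
    simp
  map_mul' p q := Subtype.ext <| by
    show ((p.1 * q.1 : Circle) : ℂ) • ((p.2 : Matrix (Fin d) (Fin d) ℂ) * q.2) =
      ((p.1 : ℂ) • (p.2 : Matrix (Fin d) (Fin d) ℂ)) *
        ((q.1 : ℂ) • (q.2 : Matrix (Fin d) (Fin d) ℂ))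
    rw [Circle.coe_mul, smul_mul_assoc, mul_smul_comm, smul_smul]

theorem phaseHom_continuous (d : ℕ) : Continuous (phaseHom d) :=
  ((continuous_subtype_val.comp continuous_fst).smul
    (continuous_subtype_val.comp continuous_snd)).subtype_mk _

theorem phaseHom_surjective (d : ℕ) (hd : 1 ≤ d) : Function.Surjective (phaseHom d) := by
  intro U
  have hdetu : ((U : Matrix (Fin d) (Fin d) ℂ)).det ∈ unitary ℂ :=
    Matrix.det_of_mem_unitary U.2
  have habs : ‖((U : Matrix (Fin d) (Fin d) ℂ)).det‖ = 1 := by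
    have h := hdetu.1
    rw [Complex.star_def, mul_comm, Complex.mul_conj] at h
    have h2 : Complex.normSq ((U : Matrix (Fin d) (Fin d) ℂ)).det = 1 := by exact_mod_cast h
    rw [← Complex.sq_norm] at h2
    nlinarith [norm_nonneg ((U : Matrix (Fin d) (Fin d) ℂ)).det]
  obtain ⟨z, hz⟩ := IsAlgClosed.exists_pow_nat_eq ((U : Matrix (Fin d) (Fin d) ℂ)).det
    (n := d) (by omega)
  have hzabs : ‖z‖ = 1 := by
    have h : ‖z‖ ^ d = 1 := by rw [← norm_pow, hz, habs]
    have h0 : (0:ℝ) ≤ ‖z‖ := norm_nonneg z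
    rcases (pow_eq_one_iff_cases.mp h) with h1 | h1 | h1
    · omega
    · exact h1
    · nlinarith [h1.1]
  have hz0 : z ≠ 0 := by
    intro h; rw [h] at hzabs; simp at hzabs
  have hzc : z * conj z = 1 := by
    rw [Complex.mul_conj]
    norm_cast
    rw [Complex.normSq_eq_norm_sq, hzabs]; norm_num
  have hzinv : z⁻¹ * conj z⁻¹ = 1 := by
    rw [map_inv₀, ← mul_inv]
    rw [hzc]; norm_num
  have hWu : z⁻¹ • (U : Matrix (Fin d) (Fin d) ℂ) ∈ Matrix.unitaryGroup (Fin d) ℂ :=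
    smul_mem_unitaryGroup hzinv U.2
  have hWdet : (z⁻¹ • (U : Matrix (Fin d) (Fin d) ℂ)).det = 1 := by
    rw [Matrix.det_smul, Fintype.card_fin, inv_pow, hz,
      inv_mul_cancel₀ (by rw [← hz]; exact pow_ne_zero _ hz0)]
  have hW : z⁻¹ • (U : Matrix (Fin d) (Fin d) ℂ) ∈ Matrix.specialUnitaryGroup (Fin d) ℂ :=
    Matrix.mem_specialUnitaryGroup_iff.mpr ⟨hWu, hWdet⟩
  refine ⟨(⟨z, show z ∈ Metric.sphere (0:ℂ) 1 by simp [Complex.dist_eq, hzabs]⟩, ⟨_, hW⟩), ?_⟩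
  refine Subtype.ext ?_
  show z • (z⁻¹ • (U : Matrix (Fin d) (Fin d) ℂ)) = U
  rw [smul_smul, mul_inv_cancel₀ hz0, one_smul]

theorem designMat_smul {d : ℕ} (t : ℕ) {z : ℂ} (hz : z * conj z = 1)
    (L : Matrix (Fin d) (Fin d) ℂ) (p q : (Fin t → Fin d) × (Fin t → Fin d)) :
    designMat t (z • L) p q = designMat t L p q := by
  simp only [designMat, kroneckerPow, Matrix.kroneckerMap_apply, Matrix.smul_apply,
    Matrix.map_apply, smul_eq_mul, _root_.map_mul, Finset.prod_mul_distrib, Finset.prod_const,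
    Finset.card_univ, Fintype.card_fin]
  rw [show ∀ A B : ℂ, z ^ t * A * ((conj z) ^ t * B) = (z * conj z) ^ t * (A * B) from
    fun A B => by ring, hz, one_pow, one_mul]

theorem continuous_designMat (d t : ℕ) (p q : (Fin t → Fin d) × (Fin t → Fin d)) :
    Continuous fun L : Matrix (Fin d) (Fin d) ℂ => designMat t L p q := by
  simp only [designMat, kroneckerPow, Matrix.kroneckerMap_apply, Matrix.map_apply]
  refine Continuous.mul ?_ ?_
  · exact continuous_finset_prod _ fun s _ => continuous_id.matrix_elem _ _
  · exact continuous_finset_prod _ fun s _ =>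
      Complex.continuous_conj.comp (continuous_id.matrix_elem _ _)

/-- The (entrywise Bochner) integral of `U^{⊗t} ⊗ (U^*)^{⊗t}` over `U(d)`
with respect to its normalized Haar (probability) measure equals the corresponding integral
of `W^{⊗t} ⊗ (W^*)^{⊗t}` over `SU(d)` with respect to its normalized Haar measure. -/
theorem integral_design_unitary_eq_specialUnitary (d : ℕ) (hd : 1 ≤ d) (t : ℕ)
    (μ : Measure ↥(Matrix.unitaryGroup (Fin d) ℂ))
    [μ.IsHaarMeasure] [IsProbabilityMeasure μ]
    (ν : Measure ↥(Matrix.specialUnitaryGroup (Fin d) ℂ))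
    [ν.IsHaarMeasure] [IsProbabilityMeasure ν]
    (p q : (Fin t → Fin d) × (Fin t → Fin d)) :
    ∫ U : ↥(Matrix.unitaryGroup (Fin d) ℂ),
        designMat t (U : Matrix (Fin d) (Fin d) ℂ) p q ∂μ =
      ∫ W : ↥(Matrix.specialUnitaryGroup (Fin d) ℂ),
        designMat t (W : Matrix (Fin d) (Fin d) ℂ) p q ∂ν := by
  classical
  set K₀ : TopologicalSpace.PositiveCompacts Circle :=
    ⟨⟨Set.univ, isCompact_univ⟩, by simp⟩ with hK₀
  set κ : Measure Circle := Measure.haarMeasure K₀ with hκ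
  haveI : IsProbabilityMeasure κ := ⟨by
    have : (Set.univ : Set Circle) = ↑K₀ := rfl
    rw [this, hκ]
    exact Measure.haarMeasure_self⟩
  set π : Measure (Circle × ↥(Matrix.specialUnitaryGroup (Fin d) ℂ)) := κ.prod ν with hπ
  haveI : IsProbabilityMeasure π := by rw [hπ]; infer_instance
  haveI : π.IsHaarMeasure := by rw [hπ]; infer_instance
  have hφc : Continuous (phaseHom d) := phaseHom_continuous d
  have hφm : Measurable ⇑(phaseHom d) := hφc.measurable
  haveI : IsProbabilityMeasure (π.map ⇑(phaseHom d)) :=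
    Measure.isProbabilityMeasure_map hφm.aemeasurable
  haveI : (π.map ⇑(phaseHom d)).IsHaarMeasure :=
    Measure.isHaarMeasure_map_of_isFiniteMeasure π (phaseHom d) hφc (phaseHom_surjective d hd)
  have hμ : μ = π.map ⇑(phaseHom d) :=
    Measure.isHaarMeasure_eq_of_isProbabilityMeasure μ (π.map ⇑(phaseHom d))
  have hf : Continuous fun U : ↥(Matrix.unitaryGroup (Fin d) ℂ) =>
      designMat t (U : Matrix (Fin d) (Fin d) ℂ) p q :=
    (continuous_designMat d t p q).comp continuous_subtype_val
  have hg : Continuous fun W : ↥(Matrix.specialUnitaryGroup (Fin d) ℂ) =>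
      designMat t (W : Matrix (Fin d) (Fin d) ℂ) p q :=
    (continuous_designMat d t p q).comp continuous_subtype_val
  rw [hμ, integral_map hφm.aemeasurable hf.aestronglyMeasurable]
  have hinv : ∀ r : Circle × ↥(Matrix.specialUnitaryGroup (Fin d) ℂ),
      designMat t ((phaseHom d r : Matrix (Fin d) (Fin d) ℂ)) p q
        = designMat t (r.2 : Matrix (Fin d) (Fin d) ℂ) p q := by
    intro r
    have hz : (r.1 : ℂ) * (starRingEnd ℂ) (r.1 : ℂ) = 1 := by
      rw [Complex.mul_conj]
      norm_cast
      simp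
    exact designMat_smul t hz _ p q
  simp_rw [hinv]
  have h2 : ∫ r : Circle × ↥(Matrix.specialUnitaryGroup (Fin d) ℂ),
        designMat t ((r.2 : Matrix (Fin d) (Fin d) ℂ)) p q ∂π
      = ∫ W, designMat t ((W : Matrix (Fin d) (Fin d) ℂ)) p q ∂(π.map Prod.snd) :=
    (integral_map measurable_snd.aemeasurable hg.aestronglyMeasurable).symm
  rw [h2, hπ, Measure.map_snd_prod, measure_univ, one_smul]
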